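/- Let η be a random Borel measure on D̄ × ℝ (D ⊂ ℝ⁴ open) such that almost surely, for every open A ⊂ D and every b ∈ ℚ, η(A × [b, ∞)) = e^{−πλb}·η(A × [0, ∞)), and η(∂D × ℝ) = 0 a.s. Then there is a random finite Borel measure Z on D̄ with Z(∂D)=0 such that almost surely η(dx dh) = (πλ)^{-1}·Z(dx) ⊗ πλ e^{−πλh} dh, i.e., η(E) = ∫∫ 1_E(x,h) Z(dx) e^{−πλh} dh for all Borel E ⊂ D̄ × ℝ. -/

import Mathlib

open MeasureTheory

lemma withDensity_exp_Ici {c : ℝ} (hc : 0 < c) (b : ℝ) :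
    (volume : Measure ℝ).withDensity (fun h => ENNReal.ofReal (Real.exp (-(c * h)))) (Set.Ici b)
      = ENNReal.ofReal (Real.exp (-(c * b)) / c) := by
  rw [withDensity_apply _ measurableSet_Ici,
    setLIntegral_congr (Ioi_ae_eq_Ici (a := b)).symm]
  have hint : Integrable (fun x => Real.exp (-(c * x))) (volume.restrict (Set.Ioi b)) := by
    have h := exp_neg_integrableOn_Ioi b hc
    simp only [neg_mul] at h
    exact h
  rw [← ofReal_integral_eq_lintegral_ofReal hint
    (Filter.Eventually.of_forall fun x => (Real.exp_pos _).le)]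
  congr 1
  have h1 := integral_comp_mul_left_Ioi (fun y => Real.exp (-y)) b hc
  simp only [integral_exp_neg_Ioi, smul_eq_mul] at h1
  rw [h1, div_eq_inv_mul]

lemma generateFrom_Ici_rat' :
    MeasurableSpace.generateFrom {I : Set ℝ | ∃ q : ℚ, I = Set.Ici (q : ℝ)}
      = (inferInstance : MeasurableSpace ℝ) := by
  have h : {I : Set ℝ | ∃ q : ℚ, I = Set.Ici (q : ℝ)} = ⋃ a : ℚ, {Set.Ici (a : ℝ)} := by
    ext I; simp [Set.mem_iUnion, eq_comm]
  rw [h, ← Real.borel_eq_generateFrom_Ici_rat]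
  exact BorelSpace.measurable_eq.symm

/-- Factorization of a random measure with the exponential invariance property:
if a.s. `η(A × [b,∞)) = e^{−πλb} η(A × [0,∞))` for all open `A ⊆ D` and rational `b`,
`η` lives on `D̄ × ℝ`, charges neither `∂D × ℝ` nor has infinite mass above level `0`,
then a.s. `η(dx dh) = Z(dx) ⊗ e^{−πλh} dh` for some random finite Borel measure `Z`
on `D̄` with `Z(∂D) = 0`. -/
theorem level_set_measure_factorization {Ω : Type*} [MeasurableSpace Ω]
    (P : Measure Ω) [IsProbabilityMeasure P]
    (lam : ℝ) (hlam : 0 < lam)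
    (D : Set (EuclideanSpace ℝ (Fin 4))) (hD : IsOpen D)
    (η : Ω → Measure (EuclideanSpace ℝ (Fin 4) × ℝ))
    (hsupp : ∀ᵐ ω ∂P, η ω {p | p.1 ∉ closure D} = 0)
    (hbdry : ∀ᵐ ω ∂P, η ω (frontier D ×ˢ Set.univ) = 0)
    (hfin : ∀ᵐ ω ∂P, η ω (Set.univ ×ˢ Set.Ici (0 : ℝ)) < ⊤)
    (hinv : ∀ᵐ ω ∂P, ∀ A : Set (EuclideanSpace ℝ (Fin 4)), IsOpen A → A ⊆ D →
      ∀ b : ℚ, η ω (A ×ˢ Set.Ici (b : ℝ)) =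
        ENNReal.ofReal (Real.exp (-(Real.pi * lam * b))) * η ω (A ×ˢ Set.Ici (0 : ℝ))) :
    ∃ Z : Ω → Measure (EuclideanSpace ℝ (Fin 4)),
      ∀ᵐ ω ∂P, IsFiniteMeasure (Z ω) ∧ Z ω (closure D)ᶜ = 0 ∧ Z ω (frontier D) = 0 ∧
        η ω = (Z ω).prod
          ((volume : Measure ℝ).withDensity
            fun h => ENNReal.ofReal (Real.exp (-(Real.pi * lam * h)))) := by
  classical
  set c := Real.pi * lam with hc
  have hcpos : 0 < c := mul_pos Real.pi_pos hlam
  set muL : Measure ℝ :=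
    (volume : Measure ℝ).withDensity (fun h => ENNReal.ofReal (Real.exp (-(c * h)))) with hmuL
  refine ⟨fun ω => ENNReal.ofReal c •
    Measure.map Prod.fst ((η ω).restrict (Set.univ ×ˢ Set.Ici (0 : ℝ))), ?_⟩
  filter_upwards [hsupp, hbdry, hfin, hinv] with ω h1 h2 h3 h4
  set Z : Measure (EuclideanSpace ℝ (Fin 4)) := ENNReal.ofReal c •
    Measure.map Prod.fst ((η ω).restrict (Set.univ ×ˢ Set.Ici (0 : ℝ))) with hZ
  -- value of Z on measurable sets
  have hZapp : ∀ A : Set (EuclideanSpace ℝ (Fin 4)), MeasurableSet A →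
      Z A = ENNReal.ofReal c * η ω (A ×ˢ Set.Ici (0 : ℝ)) := by
    intro A hA
    rw [hZ, Measure.smul_apply, smul_eq_mul, Measure.map_apply measurable_fst hA,
      Measure.restrict_apply (measurable_fst hA)]
    have hseteq : Prod.fst ⁻¹' A ∩ Set.univ ×ˢ Set.Ici (0 : ℝ) = A ×ˢ Set.Ici (0 : ℝ) := by
      ext p; simp [Set.mem_prod, and_comm]
    rw [hseteq]
  -- finiteness
  have hZfin : IsFiniteMeasure Z := by
    constructor
    rw [hZapp Set.univ MeasurableSet.univ]
    exact ENNReal.mul_lt_top ENNReal.ofReal_lt_top h3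
  -- Z vanishes off the closure and on the frontier
  have hZcl : Z (closure D)ᶜ = 0 := by
    rw [hZapp _ (measurableSet_closure.compl)]
    have : ((closure D)ᶜ ×ˢ Set.Ici (0 : ℝ)) ⊆ {p : EuclideanSpace ℝ (Fin 4) × ℝ | p.1 ∉ closure D} := by
      intro p hp; exact hp.1
    rw [measure_mono_null this h1, mul_zero]
  have hZfr : Z (frontier D) = 0 := by
    rw [hZapp _ isClosed_frontier.measurableSet]
    have : (frontier D ×ˢ Set.Ici (0 : ℝ)) ⊆ frontier D ×ˢ (Set.univ : Set ℝ) :=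
      Set.prod_mono_right (Set.subset_univ _)
    rw [measure_mono_null this h2, mul_zero]
  have hZDc : Z Dᶜ = 0 := by
    have hsub : Dᶜ ⊆ (closure D)ᶜ ∪ frontier D := by
      intro x hx
      by_cases hcl : x ∈ closure D
      · exact Or.inr ⟨hcl, by rwa [hD.interior_eq]⟩
      · exact Or.inl hcl
    exact measure_mono_null hsub (measure_union_null hZcl hZfr)
  -- η vanishes off D × ℝ
  have hηc : η ω ((D ×ˢ (Set.univ : Set ℝ))ᶜ) = 0 := by
    have hsub : (D ×ˢ (Set.univ : Set ℝ))ᶜ ⊆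
        {p : EuclideanSpace ℝ (Fin 4) × ℝ | p.1 ∉ closure D} ∪ frontier D ×ˢ (Set.univ : Set ℝ) := by
      intro p hp
      simp only [Set.mem_compl_iff, Set.mem_prod, Set.mem_univ, and_true] at hp
      by_cases hcl : p.1 ∈ closure D
      · exact Or.inr ⟨⟨hcl, by rwa [hD.interior_eq]⟩, Set.mem_univ _⟩
      · exact Or.inl hcl
    exact measure_mono_null hsub (measure_union_null h1 h2)
  have hpc : (Z.prod muL) ((D ×ˢ (Set.univ : Set ℝ))ᶜ) = 0 := by
    have h' : (D ×ˢ (Set.univ : Set ℝ))ᶜ = Dᶜ ×ˢ (Set.univ : Set ℝ) := by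
      ext p; simp [Set.mem_prod]
    rw [h', Measure.prod_prod, hZDc, zero_mul]
  -- the generating π-system
  set S : Set (Set (EuclideanSpace ℝ (Fin 4) × ℝ)) := Set.image2 (· ×ˢ ·) {A : Set (EuclideanSpace ℝ (Fin 4)) | IsOpen A}
    {I : Set ℝ | ∃ q : ℚ, I = Set.Ici (q : ℝ)} with hS
  have h_gen : (inferInstance : MeasurableSpace (EuclideanSpace ℝ (Fin 4) × ℝ)) = MeasurableSpace.generateFrom S := by
    refine (generateFrom_eq_prod ?_ generateFrom_Ici_rat' ?_ ?_).symm
    · exact BorelSpace.measurable_eq.symm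
    · exact ⟨fun _ => Set.univ, fun _ => Set.mem_setOf.mpr isOpen_univ, Set.iUnion_const _⟩
    · refine ⟨fun n => Set.Ici (((-(n : ℚ)) : ℚ) : ℝ), fun n => ⟨-(n : ℚ), rfl⟩, ?_⟩
      ext x
      simp only [Set.mem_iUnion, Set.mem_Ici, Set.mem_univ, iff_true]
      obtain ⟨n, hn⟩ := exists_nat_ge (-x)
      exact ⟨n, by push_cast; linarith⟩
  have h_pi : IsPiSystem S := by
    refine IsPiSystem.prod ?_ ?_
    · intro s hs t ht _; exact IsOpen.inter (Set.mem_setOf.mp hs) (Set.mem_setOf.mp ht)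
    · rintro s ⟨q, rfl⟩ t ⟨q', rfl⟩ _
      exact ⟨max q q', by rw [Set.Ici_inter_Ici, Rat.cast_max]⟩
  -- the covering family
  set T : Set (Set (EuclideanSpace ℝ (Fin 4) × ℝ)) :=
    Set.range (fun n : ℕ => (Set.univ : Set (EuclideanSpace ℝ (Fin 4))) ×ˢ Set.Ici (((-(n : ℚ)) : ℚ) : ℝ)) with hT
  have h_sub : T ⊆ S := by
    rintro _ ⟨n, rfl⟩
    exact Set.mem_image2_of_mem (Set.mem_setOf.mpr isOpen_univ) ⟨-(n : ℚ), rfl⟩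
  have h_cover : ⋃₀ T = Set.univ := by
    rw [hT, Set.sUnion_range]
    ext p
    simp only [Set.mem_iUnion, Set.mem_prod, Set.mem_univ, true_and, Set.mem_Ici, iff_true]
    obtain ⟨n, hn⟩ := exists_nat_ge (-p.2)
    exact ⟨n, by push_cast; linarith⟩
  -- the key computation on rectangles
  have key : ∀ (A : Set (EuclideanSpace ℝ (Fin 4))), IsOpen A → A ⊆ D → ∀ q : ℚ,
      η ω (A ×ˢ Set.Ici (q : ℝ)) ≠ ⊤ ∧
      η ω (A ×ˢ Set.Ici (q : ℝ)) = (Z.prod muL) (A ×ˢ Set.Ici (q : ℝ)) := by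
    intro A hA hAD q
    have hA0 : η ω (A ×ˢ Set.Ici (0 : ℝ)) ≠ ⊤ := by
      refine ne_top_of_le_ne_top h3.ne (measure_mono ?_)
      exact Set.prod_mono_left (Set.subset_univ _)
    constructor
    · rw [h4 A hA hAD q]
      exact (ENNReal.mul_lt_top ENNReal.ofReal_lt_top hA0.lt_top).ne
    · rw [h4 A hA hAD q, Measure.prod_prod, hZapp A hA.measurableSet,
        withDensity_exp_Ici hcpos]
      have hcomb : ENNReal.ofReal c * ENNReal.ofReal (Real.exp (-(c * (q : ℝ))) / c)
          = ENNReal.ofReal (Real.exp (-(c * (q : ℝ)))) := by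
        rw [← ENNReal.ofReal_mul hcpos.le, mul_comm c, div_mul_cancel₀ _ hcpos.ne']
      rw [mul_right_comm (ENNReal.ofReal c) (η ω (A ×ˢ Set.Ici (0 : ℝ))), hcomb]
  -- the restricted measures agree
  have hres : (η ω).restrict (D ×ˢ (Set.univ : Set ℝ))
      = (Z.prod muL).restrict (D ×ˢ (Set.univ : Set ℝ)) := by
    refine Measure.ext_of_generateFrom_of_cover_subset h_gen h_pi h_sub
      (Set.countable_range _) h_cover ?_ ?_
    · rintro _ ⟨n, rfl⟩
      rw [Measure.restrict_apply (MeasurableSet.univ.prod measurableSet_Ici)]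
      have hset : ((Set.univ : Set (EuclideanSpace ℝ (Fin 4))) ×ˢ Set.Ici (((-(n : ℚ)) : ℚ) : ℝ)) ∩
          (D ×ˢ (Set.univ : Set ℝ)) = D ×ˢ Set.Ici (((-(n : ℚ)) : ℚ) : ℝ) := by
        rw [Set.prod_inter_prod, Set.univ_inter, Set.inter_univ]
      rw [hset]
      exact (key D hD le_rfl (-(n : ℚ))).1
    · rintro _ ⟨A, hA, _, ⟨q, rfl⟩, rfl⟩
      have hAop : IsOpen A := Set.mem_setOf.mp hA
      have hms : MeasurableSet (A ×ˢ Set.Ici (q : ℝ)) :=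
        hAop.measurableSet.prod measurableSet_Ici
      rw [Measure.restrict_apply hms, Measure.restrict_apply hms]
      have hset : (A ×ˢ Set.Ici (q : ℝ)) ∩ (D ×ˢ (Set.univ : Set ℝ))
          = (A ∩ D) ×ˢ Set.Ici (q : ℝ) := by
        rw [Set.prod_inter_prod, Set.inter_univ]
      rw [hset]
      exact (key (A ∩ D) (hAop.inter hD) Set.inter_subset_right q).2
  -- conclude
  refine ⟨hZfin, hZcl, hZfr, ?_⟩
  have e1 : (η ω).restrict (D ×ˢ (Set.univ : Set ℝ)) = η ω := by
    rw [Measure.restrict_congr_set (ae_eq_univ.mpr hηc), Measure.restrict_univ]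
  have e2 : (Z.prod muL).restrict (D ×ˢ (Set.univ : Set ℝ)) = Z.prod muL := by
    rw [Measure.restrict_congr_set (ae_eq_univ.mpr hpc), Measure.restrict_univ]
  rw [← e1, hres, e2]
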